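/- Let n ≥ 1, I_{n,n} = diag(1ₙ, −1ₙ), and S = [[0,1ₙ],[1ₙ,0]] ∈ Mat_{2n}(ℂ). Define μ : ℂ^{2n} → Mat_{2n}(ℂ) by μ(v) = −(i/2)(v v* I_{n,n} − S (v v* I_{n,n})ᵀ S). Then: (a) μ(v)* I_{n,n} + I_{n,n} μ(v) = 0 and μ(v)ᵀ S + S μ(v) = 0 for all v (μ takes values in o*(2n)); (b) for every X ∈ Mat_{2n}(ℂ) with X* I_{n,n} + I_{n,n} X = 0 and Xᵀ S + S X = 0, and all v, u ∈ ℂ^{2n}, one has (1/2)·tr(ν(v,u) X) = Im((−Xv)* I_{n,n} u), where ν(v,u) = −(i/2)((u v* + v u*) I_{n,n} − S ((u v* + v u*) I_{n,n})ᵀ S) is the real directional derivative of μ at v in direction u; (c) μ(g v) = g μ(v) g⁻¹ for every g with g* I_{n,n} g = I_{n,n} and gᵀ S g = S. -/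

import Mathlib

open Matrix

/-- The matrix `I_{n,n} = diag(1ₙ, −1ₙ)`. -/
noncomputable def Inn (n : ℕ) : Matrix (Fin n ⊕ Fin n) (Fin n ⊕ Fin n) ℂ :=
  Matrix.fromBlocks 1 0 0 (-1)

/-- The matrix `S = [[0,1ₙ],[1ₙ,0]]`. -/
noncomputable def Smat (n : ℕ) : Matrix (Fin n ⊕ Fin n) (Fin n ⊕ Fin n) ℂ :=
  Matrix.fromBlocks 0 1 1 0

/-- The moment map `μ(v) = −(i/2)(v v* I_{n,n} − S (v v* I_{n,n})ᵀ S)` for the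
`O*(2n)`-action on `(ℂ^{2n})_ℝ`. -/
noncomputable def momentOstar (n : ℕ) (v : Fin n ⊕ Fin n → ℂ) :
    Matrix (Fin n ⊕ Fin n) (Fin n ⊕ Fin n) ℂ :=
  (-(Complex.I / 2)) •
    (Matrix.vecMulVec v (star v) * Inn n
      - Smat n * (Matrix.vecMulVec v (star v) * Inn n)ᵀ * Smat n)

/-- The real directional derivative of `μ` at `v` in direction `u`. -/
noncomputable def momentOstarDeriv (n : ℕ) (v u : Fin n ⊕ Fin n → ℂ) :
    Matrix (Fin n ⊕ Fin n) (Fin n ⊕ Fin n) ℂ :=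
  (-(Complex.I / 2)) •
    ((Matrix.vecMulVec u (star v) + Matrix.vecMulVec v (star u)) * Inn n
      - Smat n * ((Matrix.vecMulVec u (star v) + Matrix.vecMulVec v (star u)) * Inn n)ᵀ
          * Smat n)

lemma Inn_mul_Inn (n : ℕ) : Inn n * Inn n = 1 := by
  simp [Inn, Matrix.fromBlocks_multiply, ← Matrix.fromBlocks_one]
lemma Smat_mul_Smat (n : ℕ) : Smat n * Smat n = 1 := by
  simp [Smat, Matrix.fromBlocks_multiply, ← Matrix.fromBlocks_one]
lemma Inn_transpose (n : ℕ) : (Inn n)ᵀ = Inn n := by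
  simp [Inn, Matrix.fromBlocks_transpose]
lemma Inn_conjTranspose (n : ℕ) : (Inn n)ᴴ = Inn n := by
  simp [Inn, Matrix.fromBlocks_conjTranspose]
lemma Smat_transpose (n : ℕ) : (Smat n)ᵀ = Smat n := by
  simp [Smat, Matrix.fromBlocks_transpose]
lemma Smat_conjTranspose (n : ℕ) : (Smat n)ᴴ = Smat n := by
  simp [Smat, Matrix.fromBlocks_conjTranspose]
lemma Inn_mul_Smat (n : ℕ) : Inn n * Smat n = -(Smat n * Inn n) := by
  simp only [Inn, Smat, Matrix.fromBlocks_multiply, Matrix.fromBlocks_neg]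
  simp

lemma trace_vecMulVec_mul {n : ℕ} (u w : Fin n ⊕ Fin n → ℂ)
    (M : Matrix (Fin n ⊕ Fin n) (Fin n ⊕ Fin n) ℂ) :
    Matrix.trace (Matrix.vecMulVec u w * M) = w ⬝ᵥ (M *ᵥ u) := by
  simp only [Matrix.trace, Matrix.diag, Matrix.mul_apply, Matrix.vecMulVec_apply,
    dotProduct, Matrix.mulVec, Finset.mul_sum]
  rw [Finset.sum_comm]
  exact Finset.sum_congr rfl fun j _ => Finset.sum_congr rfl fun i _ => by ring

lemma vecMulVec_hermitian {n : ℕ} (v : Fin n ⊕ Fin n → ℂ) :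
    (Matrix.vecMulVec v (star v))ᴴ = Matrix.vecMulVec v (star v) := by
  ext i j
  simp [Matrix.vecMulVec_apply, mul_comm]

lemma vecMulVec_g {n : ℕ} (g : Matrix (Fin n ⊕ Fin n) (Fin n ⊕ Fin n) ℂ)
    (v : Fin n ⊕ Fin n → ℂ) :
    Matrix.vecMulVec (g *ᵥ v) (star (g *ᵥ v))
      = g * Matrix.vecMulVec v (star v) * gᴴ := by
  ext i j
  simp only [Matrix.vecMulVec_apply, Matrix.mul_apply, Matrix.mulVec, dotProduct,
    Pi.star_apply, Matrix.conjTranspose_apply, star_sum, star_mul']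
  simp only [Finset.sum_mul, Finset.mul_sum]
  exact Finset.sum_congr rfl fun k _ => Finset.sum_congr rfl fun l _ => by ring

lemma vecMulVec_t_hermitian {n : ℕ} (v : Fin n ⊕ Fin n → ℂ) :
    ((Matrix.vecMulVec v (star v))ᵀ)ᴴ = (Matrix.vecMulVec v (star v))ᵀ := by
  ext i j
  simp [Matrix.vecMulVec_apply, mul_comm]

lemma starc : (star (-(Complex.I / 2)) : ℂ) = Complex.I / 2 := by
  simp [Complex.star_def, map_div₀, Complex.conj_I]
  ring

theorem moment_map_ostar (n : ℕ) (hn : 1 ≤ n) :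
    -- (a) `μ` takes values in `o*(2n)`
    (∀ v : Fin n ⊕ Fin n → ℂ,
      (momentOstar n v)ᴴ * Inn n + Inn n * momentOstar n v = 0 ∧
      (momentOstar n v)ᵀ * Smat n + Smat n * momentOstar n v = 0) ∧
    -- (b) `(1/2) tr(ν(v,u) X) = Im((−Xv)* I_{n,n} u)`
    (∀ X : Matrix (Fin n ⊕ Fin n) (Fin n ⊕ Fin n) ℂ,
      Xᴴ * Inn n + Inn n * X = 0 → Xᵀ * Smat n + Smat n * X = 0 →
      ∀ v u : Fin n ⊕ Fin n → ℂ,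
        (1 / 2 : ℂ) * Matrix.trace (momentOstarDeriv n v u * X)
          = ((dotProduct (star (-(X.mulVec v))) ((Inn n).mulVec u)).im : ℂ)) ∧
    -- (c) `O*(2n)`-equivariance
    (∀ g : Matrix (Fin n ⊕ Fin n) (Fin n ⊕ Fin n) ℂ,
      gᴴ * Inn n * g = Inn n → gᵀ * Smat n * g = Smat n →
      ∀ v : Fin n ⊕ Fin n → ℂ,
        momentOstar n (g.mulVec v) = g * momentOstar n v * g⁻¹) := by
  have hII : ∀ x : Matrix (Fin n ⊕ Fin n) (Fin n ⊕ Fin n) ℂ, Inn n * (Inn n * x) = x := by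
    intro x; rw [← Matrix.mul_assoc, Inn_mul_Inn, Matrix.one_mul]
  have hSS : ∀ x : Matrix (Fin n ⊕ Fin n) (Fin n ⊕ Fin n) ℂ, Smat n * (Smat n * x) = x := by
    intro x; rw [← Matrix.mul_assoc, Smat_mul_Smat, Matrix.one_mul]
  have hIS : ∀ x : Matrix (Fin n ⊕ Fin n) (Fin n ⊕ Fin n) ℂ,
      Inn n * (Smat n * x) = -(Smat n * (Inn n * x)) := by
    intro x; rw [← Matrix.mul_assoc, Inn_mul_Smat, ← Matrix.mul_assoc, neg_mul]
  refine ⟨fun v => ⟨?_, ?_⟩, ?_, ?_⟩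
  · simp only [momentOstar, Matrix.conjTranspose_smul, Matrix.smul_mul, Matrix.mul_smul,
      Matrix.conjTranspose_sub, Matrix.conjTranspose_mul, Matrix.conjTranspose_neg,
      Matrix.conjTranspose_add, Matrix.transpose_add, Matrix.transpose_neg,
      Matrix.transpose_smul, Matrix.transpose_mul,
      Matrix.transpose_sub, Inn_transpose, Smat_transpose, Inn_conjTranspose,
      Smat_conjTranspose, vecMulVec_hermitian, vecMulVec_t_hermitian, starc,
      Matrix.sub_mul, Matrix.mul_sub, Matrix.add_mul, Matrix.mul_add,
      Matrix.mul_assoc, hII, hSS, hIS,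
      Inn_mul_Inn, Smat_mul_Smat, Inn_mul_Smat, Matrix.mul_one, Matrix.mul_neg,
      Matrix.neg_mul, neg_neg, smul_neg, smul_sub, smul_add]
    module
  · simp only [momentOstar, Matrix.transpose_smul, Matrix.smul_mul, Matrix.mul_smul,
      Matrix.transpose_sub, Matrix.transpose_add, Matrix.transpose_neg,
      Matrix.transpose_mul, Matrix.transpose_transpose,
      Inn_transpose, Smat_transpose,
      Matrix.sub_mul, Matrix.mul_sub, Matrix.add_mul, Matrix.mul_add,
      Matrix.mul_assoc, hII, hSS, hIS,
      Inn_mul_Inn, Smat_mul_Smat, Inn_mul_Smat, Matrix.mul_one, Matrix.mul_neg,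
      Matrix.neg_mul, neg_neg, smul_neg, smul_sub, smul_add]
    module
  · intro X hX1 hX2 v u
    have hXI : Xᴴ * Inn n = -(Inn n * X) := eq_neg_of_add_eq_zero_left hX1
    have hXS : Xᵀ * Smat n = -(Smat n * X) := eq_neg_of_add_eq_zero_left hX2
    have hSXS : Smat n * Xᵀ * Smat n = -X := by
      rw [Matrix.mul_assoc, hXS, Matrix.mul_neg, hSS]
    set M : Matrix (Fin n ⊕ Fin n) (Fin n ⊕ Fin n) ℂ := Inn n * X with hM
    set z : ℂ := star v ⬝ᵥ (M *ᵥ u) with hz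
    have hMH : Mᴴ = -M := by
      rw [hM, Matrix.conjTranspose_mul, Inn_conjTranspose, hXI]
    have tt : ∀ C N : Matrix (Fin n ⊕ Fin n) (Fin n ⊕ Fin n) ℂ,
        Matrix.trace (Cᵀ * N) = Matrix.trace (Nᵀ * C) := by
      intro C N
      rw [← Matrix.transpose_transpose N, Matrix.trace_transpose_mul,
        Matrix.transpose_transpose, Matrix.trace_mul_comm]
    set B : Matrix (Fin n ⊕ Fin n) (Fin n ⊕ Fin n) ℂ :=
      Matrix.vecMulVec u (star v) + Matrix.vecMulVec v (star u) with hB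
    have key1 : Matrix.trace (B * Inn n * X) = z + (star u ⬝ᵥ (M *ᵥ v)) := by
      rw [Matrix.mul_assoc, hB, Matrix.add_mul, Matrix.trace_add,
        trace_vecMulVec_mul, trace_vecMulVec_mul, ← hM, ← hz]
    have key2 : star u ⬝ᵥ (M *ᵥ v) = -((starRingEnd ℂ) z) := by
      have h1 : star z = star u ᵥ* Mᴴ ⬝ᵥ v := by
        rw [hz, Matrix.star_dotProduct, star_star, Matrix.star_mulVec]
      rw [show ((starRingEnd ℂ) z : ℂ) = star z from rfl, h1, ← Matrix.dotProduct_mulVec,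
        hMH, Matrix.neg_mulVec, dotProduct_neg, neg_neg]
    have hN : (Smat n * (X * Smat n))ᵀ = -X := by
      rw [Matrix.transpose_mul, Matrix.transpose_mul, Smat_transpose, hSXS]
    have key3 : Matrix.trace (Smat n * (B * Inn n)ᵀ * Smat n * X)
        = -(z + (star u ⬝ᵥ (M *ᵥ v))) := by
      calc Matrix.trace (Smat n * (B * Inn n)ᵀ * Smat n * X)
          = Matrix.trace (Smat n * ((B * Inn n)ᵀ * (Smat n * X))) := by
            simp only [Matrix.mul_assoc]
        _ = Matrix.trace (((B * Inn n)ᵀ * (Smat n * X)) * Smat n) :=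
            Matrix.trace_mul_comm _ _
        _ = Matrix.trace ((B * Inn n)ᵀ * (Smat n * (X * Smat n))) := by
            simp only [Matrix.mul_assoc]
        _ = Matrix.trace ((Smat n * (X * Smat n))ᵀ * (B * Inn n)) := tt _ _
        _ = Matrix.trace ((-X) * (B * Inn n)) := by rw [hN]
        _ = -(Matrix.trace (B * Inn n * X)) := by
            rw [Matrix.neg_mul, Matrix.trace_neg, Matrix.trace_mul_comm]
        _ = -(z + (star u ⬝ᵥ (M *ᵥ v))) := by rw [key1]
    have main : Matrix.trace (momentOstarDeriv n v u * X)
        = (-(Complex.I / 2)) * (2 * (z - (starRingEnd ℂ) z)) := by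
      rw [momentOstarDeriv, Matrix.smul_mul, Matrix.trace_smul, Matrix.sub_mul,
        Matrix.trace_sub, ← hB, key1, key3, key2, smul_eq_mul]
      ring
    have hRHS : star (-(X *ᵥ v)) ⬝ᵥ (Inn n *ᵥ u) = z := by
      have : star (-(X *ᵥ v)) = -(star v ᵥ* Xᴴ) := by
        rw [star_neg, Matrix.star_mulVec]
      rw [this, neg_dotProduct, ← Matrix.dotProduct_mulVec, Matrix.mulVec_mulVec,
        hXI, Matrix.neg_mulVec, dotProduct_neg, neg_neg, hM]
    rw [main, hRHS, Complex.sub_conj]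
    push_cast
    ring_nf
    rw [Complex.I_sq]
    ring
  · intro g hg1 hg2 v
    have hgl : (Inn n * gᴴ * Inn n) * g = 1 := by
      calc (Inn n * gᴴ * Inn n) * g = Inn n * (gᴴ * Inn n * g) := by
            rw [Matrix.mul_assoc, Matrix.mul_assoc, Matrix.mul_assoc]
        _ = 1 := by rw [hg1, Inn_mul_Inn]
    have hgl2 : (Smat n * gᵀ * Smat n) * g = 1 := by
      calc (Smat n * gᵀ * Smat n) * g = Smat n * (gᵀ * Smat n * g) := by
            rw [Matrix.mul_assoc, Matrix.mul_assoc, Matrix.mul_assoc]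
        _ = 1 := by rw [hg2, Smat_mul_Smat]
    have hinv1 : g⁻¹ = Inn n * gᴴ * Inn n := Matrix.inv_eq_left_inv hgl
    have hinv2 : g⁻¹ = Smat n * gᵀ * Smat n := Matrix.inv_eq_left_inv hgl2
    have r1 : gᴴ * Inn n = Inn n * g⁻¹ := by
      rw [hinv1, ← Matrix.mul_assoc, ← Matrix.mul_assoc, Inn_mul_Inn, Matrix.one_mul]
    have r2 : gᵀ * Smat n = Smat n * g⁻¹ := by
      rw [hinv2, ← Matrix.mul_assoc, ← Matrix.mul_assoc, Smat_mul_Smat, Matrix.one_mul]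
    have r3 : Smat n * g⁻¹ᵀ = g * Smat n := by
      have := congrArg Matrix.transpose r2
      rw [Matrix.transpose_mul, Matrix.transpose_mul, Smat_transpose,
        Matrix.transpose_transpose] at this
      -- this : Smat n * g = g⁻¹ᵀ * Smat n
      calc Smat n * g⁻¹ᵀ = Smat n * g⁻¹ᵀ * (Smat n * Smat n) := by
            rw [Smat_mul_Smat, Matrix.mul_one]
        _ = Smat n * (g⁻¹ᵀ * Smat n) * Smat n := by
            rw [Matrix.mul_assoc, Matrix.mul_assoc, Matrix.mul_assoc]
        _ = Smat n * (Smat n * g) * Smat n := by rw [← this]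
        _ = g * Smat n := by
            rw [← Matrix.mul_assoc, Smat_mul_Smat, Matrix.one_mul]
    have r4 : gᴴᵀ = Inn n * g⁻¹ᵀ * Inn n := by
      have := congrArg Matrix.transpose r1
      rw [Matrix.transpose_mul, Matrix.transpose_mul, Inn_transpose] at this
      -- this : Inn n * gᴴᵀ = g⁻¹ᵀ * Inn n
      calc gᴴᵀ = Inn n * (Inn n * gᴴᵀ) := by rw [hII]
        _ = Inn n * (g⁻¹ᵀ * Inn n) := by rw [this]
        _ = Inn n * g⁻¹ᵀ * Inn n := by rw [Matrix.mul_assoc]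
    have r1' : ∀ x, gᴴ * (Inn n * x) = Inn n * (g⁻¹ * x) := by
      intro x; rw [← Matrix.mul_assoc, r1, Matrix.mul_assoc]
    have r2' : ∀ x, gᵀ * (Smat n * x) = Smat n * (g⁻¹ * x) := by
      intro x; rw [← Matrix.mul_assoc, r2, Matrix.mul_assoc]
    have r3' : ∀ x, Smat n * (g⁻¹ᵀ * x) = g * (Smat n * x) := by
      intro x; rw [← Matrix.mul_assoc, r3, Matrix.mul_assoc]
    rw [momentOstar, momentOstar, vecMulVec_g]
    simp only [Matrix.transpose_mul, Inn_transpose, Smat_transpose, r4,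
      Matrix.mul_smul, Matrix.smul_mul, Matrix.mul_sub, Matrix.sub_mul,
      Matrix.mul_assoc, r1, r2, r3, r1', r2', r3', hII, hSS,
      Matrix.mul_one, Matrix.one_mul]
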